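/- Let L ≥ 1 and let n₀, n₁, …, n_L be positive integers. For l = 1,…,L let W_l be a random n_l × n_{l−1} matrix whose entries are i.i.d. N(0, σ_{w_l}²) with σ_{w_l} > 0, and let sign(W_l) denote the matrix obtained by applying the sign function entrywise. Let Δx be a random vector in ℝ^{n₀} with i.i.d. N(0,σ²) coordinates (σ > 0), and suppose W₁,…,W_L and Δx are mutually independent. Then for every output coordinate j, Var((sign(W_L)·sign(W_{L−1})·⋯·sign(W₁)·Δx)_j) ≤ σ² · ∏_{l=1}^L n_{l−1}. -/

import Mathlib

open MeasureTheory ProbabilityTheory Real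
open Filter Topology
open scoped NNReal ENNReal


lemma measurable_realSign : Measurable Real.sign := by
  have : Real.sign = fun r : ℝ => if r < 0 then (-1 : ℝ) else if 0 < r then 1 else 0 := by
    funext r; rfl
  rw [this]
  exact Measurable.ite (measurableSet_lt measurable_id measurable_const) measurable_const
    (Measurable.ite (measurableSet_lt measurable_const measurable_id) measurable_const
      measurable_const)

lemma abs_realSign_le_one (x : ℝ) : |Real.sign x| ≤ 1 := by
  rcases lt_trichotomy x 0 with h | h | h
  · simp [Real.sign_of_neg h]
  · simp [h, Real.sign_zero]
  · simp [Real.sign_of_pos h]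

lemma realSign_sq_le_one (x : ℝ) : (Real.sign x) ^ 2 ≤ 1 := by
  nlinarith [abs_realSign_le_one x, abs_nonneg (Real.sign x), sq_abs (Real.sign x)]


lemma my_variance_congr {Ω : Type*} [MeasurableSpace Ω] {μ : Measure Ω} {X Y : Ω → ℝ}
    (h : X =ᵐ[μ] Y) : variance X μ = variance Y μ := by
  have hI : ∫ ω, X ω ∂μ = ∫ ω, Y ω ∂μ := integral_congr_ae h
  rw [ProbabilityTheory.variance, ProbabilityTheory.variance,
    ProbabilityTheory.evariance, ProbabilityTheory.evariance]
  congr 1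
  apply lintegral_congr_ae
  filter_upwards [h] with ω hω
  rw [hω, hI]

lemma my_iIndepFun_ae_eq {ι Ω : Type*} [MeasurableSpace Ω] {μ : Measure Ω} [Countable ι]
    {β : ι → Type*} [m : ∀ i, MeasurableSpace (β i)] {f g : ∀ i, Ω → β i}
    (h : iIndepFun f μ) (hfg : ∀ i, f i =ᵐ[μ] g i) : iIndepFun g μ := by
  rw [iIndepFun_iff_measure_inter_preimage_eq_mul] at h ⊢
  intro S sets hsets
  have hae : ∀ᵐ ω ∂μ, ∀ i, f i ω = g i ω := ae_all_iff.2 hfg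
  have h1 : ∀ i : ι, μ (g i ⁻¹' sets i) = μ (f i ⁻¹' sets i) := by
    intro i
    apply measure_congr
    filter_upwards [hfg i] with ω hω
    show (g i ω ∈ sets i) = (f i ω ∈ sets i); rw [hω]
  have h2 : μ (⋂ i ∈ S, g i ⁻¹' sets i) = μ (⋂ i ∈ S, f i ⁻¹' sets i) := by
    apply measure_congr
    filter_upwards [hae] with ω hω
    show (ω ∈ ⋂ i ∈ S, g i ⁻¹' sets i) = (ω ∈ ⋂ i ∈ S, f i ⁻¹' sets i)
    simp only [Set.mem_iInter, Set.mem_preimage, hω]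
  rw [h2, h S hsets]
  exact Finset.prod_congr rfl fun i _ => (h1 i).symm


lemma integrable_sq_exp_neg_mul_sq {b : ℝ} (hb : 0 < b) :
    Integrable fun x : ℝ => x ^ 2 * Real.exp (-b * x ^ 2) := by
  have := integrable_rpow_mul_exp_neg_mul_sq hb (by norm_num : (-1 : ℝ) < 2)
  simpa [Real.rpow_two] using this

lemma integral_sq_exp_neg_mul_sq {b : ℝ} (hb : 0 < b) :
    ∫ x : ℝ, x ^ 2 * Real.exp (-b * x ^ 2) = Real.sqrt (π / b) / (2 * b) := by
  set f := fun x : ℝ => x * Real.exp (-b * x ^ 2) with hf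
  set g := fun x : ℝ => Real.exp (-b * x ^ 2) - 2 * b * (x ^ 2 * Real.exp (-b * x ^ 2)) with hg
  have hderiv : ∀ x, HasDerivAt f (g x) x := by
    intro x
    have h1 : HasDerivAt (fun x : ℝ => -b * x ^ 2) (-b * (2 * x)) x := by
      simpa using (hasDerivAt_pow 2 x).const_mul (-b)
    have h2 := h1.exp
    have h3 := (hasDerivAt_id x).mul h2
    have h4 : HasDerivAt f (1 * rexp (-b * x ^ 2) + id x * (rexp (-b * x ^ 2) * (-b * (2 * x)))) x := h3
    convert h4 using 1
    simp only [hg, id]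
    ring
  have hint2 := integrable_sq_exp_neg_mul_sq hb
  have hg_int : Integrable g := (integrable_exp_neg_mul_sq hb).sub (hint2.const_mul (2 * b))
  have htop : Tendsto f atTop (𝓝 0) := by
    have hlo := rpow_mul_exp_neg_mul_sq_isLittleO_exp_neg hb 1
    have he : Tendsto (fun x : ℝ => Real.exp (-(1 / 2) * x)) atTop (𝓝 0) := by
      apply Real.tendsto_exp_atBot.comp
      have h1 : Tendsto (fun x : ℝ => (1 / 2 : ℝ) * x) atTop atTop :=
        Tendsto.const_mul_atTop (by norm_num) tendsto_id
      have h2 := tendsto_neg_atTop_atBot.comp h1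
      have h3 : (fun x : ℝ => -(1 / 2) * x) = (Neg.neg ∘ fun x : ℝ => (1 / 2 : ℝ) * x) := by
        funext x; show -(1 / 2) * x = -((1 / 2 : ℝ) * x); ring
      show Tendsto (fun x : ℝ => -(1 / 2) * x) atTop atBot
      rw [h3]; exact h2
    have := hlo.isBigO.trans_tendsto he
    simpa [Real.rpow_one, hf] using this
  have hbot : Tendsto f atBot (𝓝 0) := by
    have h1 : Tendsto (fun x : ℝ => f (-x)) atTop (𝓝 (-0)) := by
      have : (fun x : ℝ => f (-x)) = fun x => -(f x) := by
        funext x; simp only [hf]; ring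
      rw [this]
      exact htop.neg
    rw [neg_zero] at h1
    have h2 := h1.comp tendsto_neg_atBot_atTop
    simpa [Function.comp_def] using h2
  have h0 : ∫ x, g x = 0 - 0 := integral_of_hasDerivAt_of_tendsto hderiv hg_int hbot htop
  rw [sub_zero] at h0
  have hsplit : ∫ x, g x
      = (∫ x : ℝ, Real.exp (-b * x ^ 2)) - 2 * b * ∫ x : ℝ, x ^ 2 * Real.exp (-b * x ^ 2) := by
    rw [hg]
    rw [integral_sub (integrable_exp_neg_mul_sq hb) (hint2.const_mul (2 * b)),
      MeasureTheory.integral_const_mul]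
  rw [hsplit, integral_gaussian] at h0
  have h2b : (2 * b) ≠ 0 := by positivity
  field_simp at h0 ⊢
  linarith


lemma integral_gaussianReal_eq {v : ℝ≥0} (hv : v ≠ 0) (g : ℝ → ℝ) :
    ∫ x, g x ∂(gaussianReal 0 v) = ∫ x, gaussianPDFReal 0 v x * g x := by
  rw [gaussianReal_of_var_ne_zero 0 hv]
  have hmeas : Measurable fun x => (gaussianPDFReal 0 v x).toNNReal :=
    (measurable_gaussianPDFReal 0 v).real_toNNReal
  have hpdf : gaussianPDF 0 v = fun x => (((gaussianPDFReal 0 v x).toNNReal : ℝ≥0) : ℝ≥0∞) := rfl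
  rw [hpdf, integral_withDensity_eq_integral_smul hmeas g]
  congr 1; funext x
  simp [NNReal.smul_def, Real.coe_toNNReal _ (gaussianPDFReal_nonneg 0 v x)]

lemma integral_sq_gaussianReal {v : ℝ≥0} (hv : v ≠ 0) :
    ∫ x, x ^ 2 ∂(gaussianReal 0 v) = (v : ℝ) := by
  have hvpos : (0 : ℝ) < v := lt_of_le_of_ne v.coe_nonneg (by exact_mod_cast (Ne.symm hv))
  set b : ℝ := (2 * (v : ℝ))⁻¹ with hbdef
  have hb : 0 < b := by positivity
  rw [integral_gaussianReal_eq hv]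
  have hInt : ∀ x : ℝ, gaussianPDFReal 0 v x * x ^ 2
      = (Real.sqrt (2 * π * v))⁻¹ * (x ^ 2 * Real.exp (-b * x ^ 2)) := by
    intro x
    rw [gaussianPDFReal]
    have : -(x - 0) ^ 2 / (2 * (v : ℝ)) = -b * x ^ 2 := by
      rw [hbdef]; field_simp; ring
    rw [this]; ring
  simp_rw [hInt]
  rw [MeasureTheory.integral_const_mul, integral_sq_exp_neg_mul_sq hb]
  have hπb : π / b = 2 * π * (v : ℝ) := by rw [hbdef]; field_simp
  rw [hπb]
  have hs : Real.sqrt (2 * π * (v : ℝ)) ≠ 0 := by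
    have : (0:ℝ) < 2 * π * v := by positivity
    positivity
  have h2b : 2 * b = ((v : ℝ))⁻¹ := by rw [hbdef]; field_simp
  rw [h2b]
  field_simp

lemma integrable_sq_gaussianReal {v : ℝ≥0} (hv : v ≠ 0) :
    Integrable (fun x : ℝ => x ^ 2) (gaussianReal 0 v) := by
  have hvpos : (0 : ℝ) < v := lt_of_le_of_ne v.coe_nonneg (by exact_mod_cast (Ne.symm hv))
  set b : ℝ := (2 * (v : ℝ))⁻¹ with hbdef
  have hb : 0 < b := by positivity
  rw [gaussianReal_of_var_ne_zero 0 hv]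
  rw [integrable_withDensity_iff (measurable_gaussianPDF 0 v)
    (ae_of_all _ fun x => ENNReal.ofReal_lt_top)]
  have : ∀ x : ℝ, x ^ 2 * (gaussianPDF 0 v x).toReal
      = (Real.sqrt (2 * π * v))⁻¹ * (x ^ 2 * Real.exp (-b * x ^ 2)) := by
    intro x
    rw [gaussianPDF, ENNReal.toReal_ofReal (gaussianPDFReal_nonneg 0 v x), gaussianPDFReal]
    have : -(x - 0) ^ 2 / (2 * (v : ℝ)) = -b * x ^ 2 := by
      rw [hbdef]; field_simp; ring
    rw [this]; ring
  simp_rw [this]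
  exact (integrable_sq_exp_neg_mul_sq hb).const_mul _

lemma memLp_id_gaussianReal {v : ℝ≥0} (hv : v ≠ 0) :
    MemLp (fun x : ℝ => x) 2 (gaussianReal 0 v) :=
  (memLp_two_iff_integrable_sq aestronglyMeasurable_id).2 (integrable_sq_gaussianReal hv)

lemma integral_sign_gaussianReal {v : ℝ≥0} :
    ∫ x, Real.sign x ∂(gaussianReal 0 v) = 0 := by
  by_cases hv : v = 0
  · simp [hv, Real.sign_zero]
  have hmap : Measure.map (fun x : ℝ => -x) (gaussianReal 0 v) = gaussianReal 0 v := by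
    have h := gaussianReal_map_const_mul (μ := 0) (v := v) (-1)
    have h1 : (fun x : ℝ => -x) = ((-1 : ℝ) * ·) := by funext x; simp
    have h2 : (⟨(-1 : ℝ)^2, sq_nonneg _⟩ : ℝ≥0) = 1 := by ext; norm_num
    rw [h1]
    rw [h]
    congr 1
    · simp
    · exact (congrArg (· * v) h2).trans (one_mul v)
  have hI : ∫ x, Real.sign x ∂(gaussianReal 0 v)
      = ∫ x, Real.sign (-x) ∂(gaussianReal 0 v) := by
    conv_lhs => rw [← hmap]
    rw [integral_map measurable_neg.aemeasurable
      (measurable_realSign.aestronglyMeasurable)]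
  simp_rw [Real.sign_neg, integral_neg] at hI
  linarith


/-- The output of a multi-layer linear network: `netOut n W x 0 = x` and
`netOut n W x (l+1) ω = W_l ω ⬝ᵥ netOut n W x l ω`, where `W_l` is the (random) weight
matrix of layer `l+1` and `x` is the (random) input vector. -/
def netOut {Ω : Type*} (n : ℕ → ℕ)
    (W : ∀ l : ℕ, Ω → Matrix (Fin (n (l + 1))) (Fin (n l)) ℝ)
    (x : Ω → Fin (n 0) → ℝ) : ∀ l : ℕ, Ω → Fin (n l) → ℝ
  | 0 => x
  | l + 1 => fun ω => (W l ω).mulVec (netOut n W x l ω)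

set_option maxHeartbeats 2000000 in
/-- **Multi-layer accumulated perturbation bound, weight-binarized network.**  If the
entries of the layer-`l` weight matrix `W_l` (of size `n_{l+1} × n_l`) are i.i.d.
`N(0,σ_{w_l}²)`, the coordinates of the input perturbation `Δx` are i.i.d. `N(0,σ²)`,
all mutually independent, and `sign(W_l)` denotes the entrywise sign of `W_l`
(`Real.sign t` is `1` if `t > 0`, `-1` if `t < 0`, `0` if `t = 0`), then every
coordinate `j` of the output variation `sign(W_{L-1})·⋯·sign(W_0)·Δx` satisfies
`Var((sign(W_{L-1})·⋯·sign(W_0)·Δx)_j) ≤ σ² · ∏_{l<L} n_l`. -/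
theorem variance_multilayer_weight_binarized_le
    {Ω : Type*} [MeasurableSpace Ω] (μ : Measure Ω) [IsProbabilityMeasure μ]
    (L : ℕ) (hL : 1 ≤ L) (n : ℕ → ℕ) (hn : ∀ l ≤ L, 0 < n l)
    (σw : Fin L → ℝ) (hσw : ∀ l, 0 < σw l) (σ : ℝ) (hσ : 0 < σ)
    (W : ∀ l : ℕ, Ω → Matrix (Fin (n (l + 1))) (Fin (n l)) ℝ)
    (Δx : Ω → Fin (n 0) → ℝ)
    (hW : ∀ (l : Fin L) (i : Fin (n ((l : ℕ) + 1))) (j : Fin (n (l : ℕ))),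
      Measure.map (fun ω => W (l : ℕ) ω i j) μ
        = gaussianReal 0 ⟨(σw l) ^ 2, sq_nonneg (σw l)⟩)
    (hΔx : ∀ i, Measure.map (fun ω => Δx ω i) μ
        = gaussianReal 0 ⟨σ ^ 2, sq_nonneg σ⟩)
    (hindep : iIndepFun
      (Sum.elim
        (fun q : Σ l : Fin L, Fin (n ((l : ℕ) + 1)) × Fin (n (l : ℕ)) =>
          fun ω => W (q.1 : ℕ) ω q.2.1 q.2.2)
        (fun i : Fin (n 0) => fun ω => Δx ω i)) μ) :
    ∀ j : Fin (n L),
      variance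
          (fun ω => netOut n (fun l ω' => (W l ω').map Real.sign) Δx L ω j) μ
        ≤ σ ^ 2 * ∏ l : Fin L, (n (l : ℕ) : ℝ) := by
  classical
  intro j
  set ι := (Σ l : Fin L, Fin (n ((l : ℕ) + 1)) × Fin (n (l : ℕ))) ⊕ Fin (n 0) with hι
  set f : ι → Ω → ℝ := Sum.elim
      (fun q : Σ l : Fin L, Fin (n ((l : ℕ) + 1)) × Fin (n (l : ℕ)) =>
        fun ω => W (q.1 : ℕ) ω q.2.1 q.2.2)
      (fun i : Fin (n 0) => fun ω => Δx ω i) with hf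
  -- the variance parameters
  have hv0 : (⟨σ ^ 2, sq_nonneg σ⟩ : ℝ≥0) ≠ 0 := by
    intro h
    have := congrArg (fun x : ℝ≥0 => (x : ℝ)) h
    change σ ^ 2 = 0 at this
    nlinarith
  have hvw : ∀ l : Fin L, (⟨(σw l) ^ 2, sq_nonneg (σw l)⟩ : ℝ≥0) ≠ 0 := by
    intro l h
    have := congrArg (fun x : ℝ≥0 => (x : ℝ)) h
    change σw l ^ 2 = 0 at this
    nlinarith [hσw l]
  -- each coordinate function is a.e. measurable
  have hmapf : ∀ i : ι, Measure.map (f i) μ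
      = gaussianReal 0 (Sum.elim (fun q : Σ l : Fin L, Fin (n ((l : ℕ) + 1)) × Fin (n (l : ℕ)) =>
          (⟨(σw q.1) ^ 2, sq_nonneg (σw q.1)⟩ : ℝ≥0)) (fun _ => (⟨σ ^ 2, sq_nonneg σ⟩ : ℝ≥0)) i) := by
    intro i
    cases i with
    | inl q => exact hW q.1 q.2.1 q.2.2
    | inr i => exact hΔx i
  have haem : ∀ i : ι, AEMeasurable (f i) μ := by
    intro i
    by_contra h
    have h1 := hmapf i
    rw [Measure.map_of_not_aemeasurable h] at h1
    have h2 := congrArg (fun m : Measure ℝ => m Set.univ) h1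
    simp [measure_univ] at h2
  -- measurable modifications
  set f' : ι → Ω → ℝ := fun i => (haem i).mk (f i) with hf'
  have hf'meas : ∀ i, Measurable (f' i) := fun i => (haem i).measurable_mk
  have hf'ae : ∀ i, f i =ᵐ[μ] f' i := fun i => (haem i).ae_eq_mk
  have hindep' : iIndepFun f' μ :=
    my_iIndepFun_ae_eq hindep hf'ae
  have hmapf' : ∀ i : ι, Measure.map (f' i) μ = Measure.map (f i) μ :=
    fun i => (Measure.map_congr (hf'ae i)).symm
  -- the modified input and weights
  set Δx' : Ω → Fin (n 0) → ℝ := fun ω i => f' (Sum.inr i) ω with hΔx'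
  set W' : ∀ l : ℕ, Ω → Matrix (Fin (n (l + 1))) (Fin (n l)) ℝ := fun l ω i k =>
    if h : l < L then f' (Sum.inl ⟨⟨l, h⟩, (i, k)⟩) ω else 0 with hW'
  set Y : ∀ l : ℕ, Ω → Fin (n l) → ℝ :=
    netOut n (fun l ω => (W' l ω).map Real.sign) Δx' with hY
  -- a.e. equality of the outputs
  have hae_all : ∀ᵐ ω ∂μ, ∀ i, f i ω = f' i ω := ae_all_iff.2 hf'ae
  have haeY : (fun ω => netOut n (fun l ω' => (W l ω').map Real.sign) Δx L ω j)
      =ᵐ[μ] fun ω => Y L ω j := by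
    filter_upwards [hae_all] with ω hω
    suffices h : ∀ l, l ≤ L → ∀ k : Fin (n l),
        netOut n (fun l ω' => (W l ω').map Real.sign) Δx l ω k = Y l ω k from
      h L le_rfl j
    intro l
    induction l with
    | zero =>
      intro _ k
      exact hω (Sum.inr k)
    | succ m ih =>
      intro hm k
      have hmL : m < L := Nat.lt_of_succ_le hm
      show ((W m ω).map Real.sign).mulVec
          (netOut n (fun l ω' => (W l ω').map Real.sign) Δx m ω) k
        = ((W' m ω).map Real.sign).mulVec (Y m ω) k
      simp only [Matrix.mulVec, dotProduct, Matrix.map_apply]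
      refine Finset.sum_congr rfl fun i _ => ?_
      rw [ih (le_of_lt hmL) i]
      congr 1
      show Real.sign (W m ω k i) = Real.sign (W' m ω k i)
      have : W' m ω k i = f' (Sum.inl ⟨⟨m, hmL⟩, (k, i)⟩) ω := by
        simp only [hW', dif_pos hmL]
      rw [this, ← hω (Sum.inl ⟨⟨m, hmL⟩, (k, i)⟩)]
      rfl
  rw [my_variance_congr haeY]
  -- function-of-coordinates structure
  set Wv : ∀ l : ℕ, (ι → ℝ) → Matrix (Fin (n (l + 1))) (Fin (n l)) ℝ := fun l v i k =>
    if h : l < L then v (Sum.inl ⟨⟨l, h⟩, (i, k)⟩) else 0 with hWv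
  set xv : (ι → ℝ) → Fin (n 0) → ℝ := fun v i => v (Sum.inr i) with hxv
  set G : ∀ l : ℕ, (ι → ℝ) → Fin (n l) → ℝ :=
    netOut n (fun l v => (Wv l v).map Real.sign) xv with hG
  set F : Ω → ι → ℝ := fun ω i => f' i ω with hF
  have hFmeas : Measurable F := measurable_pi_lambda _ hf'meas
  have hYG : ∀ l ω k, Y l ω k = G l (F ω) k := by
    intro l
    induction l with
    | zero => intro ω k; rfl
    | succ m ih =>
      intro ω k
      show ((W' m ω).map Real.sign).mulVec (Y m ω) k
        = ((Wv m (F ω)).map Real.sign).mulVec (G m (F ω)) k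
      simp only [Matrix.mulVec, dotProduct, Matrix.map_apply]
      refine Finset.sum_congr rfl fun i _ => ?_
      rw [ih ω i]
  have hWvmeas : ∀ (m : ℕ) (i : Fin (n (m + 1))) (k : Fin (n m)),
      Measurable fun v : ι → ℝ => Wv m v i k := by
    intro m i k
    by_cases h : m < L
    · simp only [hWv, dif_pos h]; exact measurable_pi_apply _
    · simp only [hWv, dif_neg h]; exact measurable_const
  have hGmeas : ∀ (l : ℕ) (k : Fin (n l)), Measurable fun v : ι → ℝ => G l v k := by
    intro l
    induction l with
    | zero => intro k; exact measurable_pi_apply _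
    | succ m ih =>
      intro k
      show Measurable fun v : ι → ℝ => ((Wv m v).map Real.sign).mulVec (G m v) k
      simp only [Matrix.mulVec, dotProduct, Matrix.map_apply]
      exact Finset.measurable_sum _ fun i _ =>
        (measurable_realSign.comp (hWvmeas m k i)).mul (ih i)
  have hYmeas : ∀ (l : ℕ) (k : Fin (n l)), Measurable fun ω => Y l ω k := by
    intro l k
    have h1 : (fun ω => Y l ω k) = fun ω => G l (F ω) k := funext fun ω => hYG l ω k
    rw [h1]
    exact (hGmeas l k).comp hFmeas
  have hGdep : ∀ (l : ℕ), l ≤ L → ∀ (v w : ι → ℝ),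
      (∀ q : Σ l' : Fin L, Fin (n ((l' : ℕ) + 1)) × Fin (n (l' : ℕ)),
        (q.1 : ℕ) < l → v (Sum.inl q) = w (Sum.inl q)) →
      (∀ i, v (Sum.inr i) = w (Sum.inr i)) →
      ∀ k, G l v k = G l w k := by
    intro l
    induction l with
    | zero => intro _ v w _ hr k; exact hr k
    | succ m ih =>
      intro hm v w hl hr k
      have hmL : m < L := Nat.lt_of_succ_le hm
      show ((Wv m v).map Real.sign).mulVec (G m v) k
        = ((Wv m w).map Real.sign).mulVec (G m w) k
      simp only [Matrix.mulVec, dotProduct, Matrix.map_apply]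
      refine Finset.sum_congr rfl fun i _ => ?_
      rw [ih (le_of_lt hmL) v w (fun q hq => hl q (Nat.lt_succ_of_lt hq)) hr i]
      congr 1
      show Real.sign (Wv m v k i) = Real.sign (Wv m w k i)
      simp only [hWv, dif_pos hmL]
      rw [hl ⟨⟨m, hmL⟩, (k, i)⟩ (Nat.lt_succ_self m)]
  -- the main induction
  have key : ∀ l : ℕ, l ≤ L → ∀ k : Fin (n l),
      MemLp (fun ω => Y l ω k) 2 μ ∧
      ∫ ω, (Y l ω k) ^ 2 ∂μ ≤ σ ^ 2 * ∏ m ∈ Finset.range l, (n m : ℝ) := by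
    intro l
    induction l with
    | zero =>
      intro _ k
      have hmapk : Measure.map (f' (Sum.inr k)) μ
          = gaussianReal 0 (⟨σ ^ 2, sq_nonneg σ⟩ : ℝ≥0) := by
        rw [hmapf' (Sum.inr k)]
        exact hΔx k
      constructor
      · have h1 : MemLp (fun x : ℝ => x) 2 (Measure.map (f' (Sum.inr k)) μ) := by
          rw [hmapk]; exact memLp_id_gaussianReal hv0
        exact (memLp_map_measure_iff aestronglyMeasurable_id
          (hf'meas (Sum.inr k)).aemeasurable).1 h1
      · have hg2 : Measurable fun x : ℝ => x ^ 2 := by fun_prop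
        have h1 : ∫ ω, (Y 0 ω k) ^ 2 ∂μ = ∫ x, x ^ 2 ∂(Measure.map (f' (Sum.inr k)) μ) :=
          (integral_map (hf'meas (Sum.inr k)).aemeasurable hg2.aestronglyMeasurable).symm
        rw [h1, hmapk, integral_sq_gaussianReal hv0]
        simp [NNReal.coe_mk]
        exact le_rfl
    | succ m ih =>
      intro hm k
      have hmL : m < L := Nat.lt_of_succ_le hm
      have ihm := ih (le_of_lt hmL)
      set lf : Fin L := ⟨m, hmL⟩ with hlf
      set idx : Fin (n m) → ι := fun i => Sum.inl ⟨lf, (k, i)⟩ with hidx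
      set s : Fin (n m) → Ω → ℝ := fun i ω => Real.sign (f' (idx i) ω) with hs
      set Z : Fin (n m) → Ω → ℝ := fun i ω => Y m ω i with hZ
      have hYsum : ∀ ω, Y (m + 1) ω k = ∑ i, s i ω * Z i ω := by
        intro ω
        show ((W' m ω).map Real.sign).mulVec (Y m ω) k = _
        simp only [Matrix.mulVec, dotProduct, Matrix.map_apply]
        refine Finset.sum_congr rfl fun i _ => ?_
        congr 1
        show Real.sign (W' m ω k i) = Real.sign (f' (idx i) ω)
        simp only [hW', dif_pos hmL]
        rfl
      have hZmem : ∀ i, MemLp (Z i) 2 μ := fun i => (ihm i).1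
      have hZmeas : ∀ i, Measurable (Z i) := fun i => hYmeas m i
      have hZsq_int : ∀ i, Integrable (fun ω => Z i ω ^ 2) μ := fun i =>
        (memLp_two_iff_integrable_sq (hZmeas i).aestronglyMeasurable).1 (hZmem i)
      have hsmeas : ∀ i, Measurable (s i) := fun i =>
        measurable_realSign.comp (hf'meas (idx i))
      have hsZmem : ∀ i, MemLp (fun ω => s i ω * Z i ω) 2 μ := by
        intro i
        refine MemLp.of_le (hZmem i) ((hsmeas i).mul (hZmeas i)).aestronglyMeasurable ?_
        refine ae_of_all _ fun ω => ?_
        rw [Real.norm_eq_abs, Real.norm_eq_abs, abs_mul]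
        calc |s i ω| * |Z i ω| ≤ 1 * |Z i ω| := by
              gcongr; exact abs_realSign_le_one _
        _ = |Z i ω| := one_mul _
      have hmem : MemLp (fun ω => Y (m + 1) ω k) 2 μ := by
        have h1 : (fun ω => Y (m + 1) ω k) = fun ω => ∑ i, s i ω * Z i ω :=
          funext hYsum
        rw [h1]
        exact memLp_finset_sum Finset.univ fun i _ => hsZmem i
      have hBint : ∀ i i' : Fin (n m),
          Integrable (fun ω => (1 / 2 : ℝ) * (Z i ω ^ 2 + Z i' ω ^ 2)) μ := by
        intro i i'
        have h1 := ((hZsq_int i).add (hZsq_int i')).const_mul (1 / 2 : ℝ)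
        simpa using h1
      have hterm_int : ∀ i i', Integrable (fun ω => (s i ω * Z i ω) * (s i' ω * Z i' ω)) μ := by
        intro i i'
        refine Integrable.mono' (hBint i i')
          (((hsmeas i).mul (hZmeas i)).mul
            ((hsmeas i').mul (hZmeas i'))).aestronglyMeasurable (ae_of_all _ fun ω => ?_)
        rw [Real.norm_eq_abs, abs_mul, abs_mul, abs_mul]
        have h1 : |s i ω| ≤ 1 := abs_realSign_le_one _
        have h2 : |s i' ω| ≤ 1 := abs_realSign_le_one _
        have hzz : 0 ≤ |Z i ω| * |Z i' ω| := mul_nonneg (abs_nonneg _) (abs_nonneg _)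
        have hss : |s i ω| * |s i' ω| ≤ 1 := mul_le_one₀ h1 (abs_nonneg _) h2
        have h3 : (|s i ω| * |Z i ω|) * (|s i' ω| * |Z i' ω|) ≤ |Z i ω| * |Z i' ω| := by
          calc (|s i ω| * |Z i ω|) * (|s i' ω| * |Z i' ω|)
              = (|s i ω| * |s i' ω|) * (|Z i ω| * |Z i' ω|) := by ring
          _ ≤ 1 * (|Z i ω| * |Z i' ω|) := mul_le_mul_of_nonneg_right hss hzz
          _ = |Z i ω| * |Z i' ω| := one_mul _
        refine le_trans h3 ?_
        show |Z i ω| * |Z i' ω| ≤ (1 / 2 : ℝ) * (Z i ω ^ 2 + Z i' ω ^ 2)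
        nlinarith [sq_nonneg (|Z i ω| - |Z i' ω|), sq_abs (Z i ω), sq_abs (Z i' ω),
          abs_nonneg (Z i ω), abs_nonneg (Z i' ω)]
      -- expand the square
      have hsplit : ∫ ω, (Y (m + 1) ω k) ^ 2 ∂μ
          = ∑ i, ∑ i', ∫ ω, (s i ω * Z i ω) * (s i' ω * Z i' ω) ∂μ := by
        have h1 : (fun ω => (Y (m + 1) ω k) ^ 2)
            = fun ω => ∑ i, ∑ i', (s i ω * Z i ω) * (s i' ω * Z i' ω) := by
          funext ω
          rw [hYsum ω, sq, Finset.sum_mul_sum]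
        rw [h1, integral_finset_sum _ fun i _ =>
          integrable_finset_sum _ fun i' _ => hterm_int i i']
        exact Finset.sum_congr rfl fun i _ =>
          integral_finset_sum _ fun i' _ => hterm_int i i'
      -- off-diagonal terms vanish
      have hoff : ∀ i i', i ≠ i' → ∫ ω, (s i ω * Z i ω) * (s i' ω * Z i' ω) ∂μ = 0 := by
        intro i i' hii'
        have hidx_ne : idx i ≠ idx i' := by
          intro h
          apply hii'
          have h1 := Sum.inl.inj h
          have h2 := eq_of_heq (Sigma.mk.inj_iff.mp h1).2
          exact congrArg Prod.snd h2
        -- independence of the pair of signs from the pair of Z's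
        set S : Finset ι := {idx i, idx i'} with hS
        set T : Finset ι := Finset.univ.filter (fun a : ι =>
          Sum.elim (fun q : Σ l' : Fin L, Fin (n ((l' : ℕ) + 1)) × Fin (n (l' : ℕ)) =>
            (q.1 : ℕ) < m) (fun _ => True) a) with hT
        have hdisj : Disjoint S T := by
          rw [Finset.disjoint_left]
          intro a haS haT
          rw [hS, Finset.mem_insert, Finset.mem_singleton] at haS
          rw [hT, Finset.mem_filter] at haT
          rcases haS with h | h <;> · subst h; simp [hidx, hlf] at haT
        have hIndepST := hindep'.indepFun_finset S T hdisj hf'meas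
        have hii1 : idx i ∈ S := by simp [hS]
        have hii2 : idx i' ∈ S := by simp [hS]
        set ext : (∀ a : T, ℝ) → ι → ℝ := fun u a => if h : a ∈ T then u ⟨a, h⟩ else 0
          with hext
        have hextmeas : Measurable ext := by
          apply measurable_pi_lambda
          intro a
          by_cases h : a ∈ T
          · simp only [hext, dif_pos h]; exact measurable_pi_apply _
          · simp only [hext, dif_neg h]; exact measurable_const
        set φ : (∀ a : S, ℝ) → ℝ := fun u =>
          Real.sign (u ⟨idx i, hii1⟩) * Real.sign (u ⟨idx i', hii2⟩) with hφ
        set ψ : (∀ a : T, ℝ) → ℝ := fun u => G m (ext u) i * G m (ext u) i' with hψ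
        have hφmeas : Measurable φ :=
          (measurable_realSign.comp (measurable_pi_apply _)).mul
            (measurable_realSign.comp (measurable_pi_apply _))
        have hψmeas : Measurable ψ :=
          ((hGmeas m i).comp hextmeas).mul ((hGmeas m i').comp hextmeas)
        have hcomp := hIndepST.comp hφmeas hψmeas
        have hLHS : (φ ∘ fun ω (a : S) => f' a ω) = fun ω => s i ω * s i' ω := rfl
        have hRHS : (ψ ∘ fun ω (a : T) => f' a ω) = fun ω => Z i ω * Z i' ω := by
          funext ω
          have hexteq : ∀ k' : Fin (n m), G m (ext fun a : T => f' a ω) k' = G m (F ω) k' := by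
            intro k'
            apply hGdep m (le_of_lt hmL)
            · intro q hq
              have hqT : (Sum.inl q : ι) ∈ T := by simp [hT, hq]
              simp only [hext, dif_pos hqT]
              rfl
            · intro i0
              have hi0T : (Sum.inr i0 : ι) ∈ T := by simp [hT]
              simp only [hext, dif_pos hi0T]
              rfl
          show ψ (fun a : T => f' a ω) = Z i ω * Z i' ω
          rw [hψ]
          simp only
          rw [hexteq i, hexteq i', ← hYG m ω i, ← hYG m ω i']
        rw [hLHS, hRHS] at hcomp
        have hIndep2 : IndepFun (fun ω => s i ω * s i' ω) (fun ω => Z i ω * Z i' ω) μ := hcomp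
        have hrearr : (fun ω => (s i ω * Z i ω) * (s i' ω * Z i' ω))
            = fun ω => (s i ω * s i' ω) * (Z i ω * Z i' ω) := by
          funext ω; ring
        rw [hrearr]
        rw [hIndep2.integral_fun_mul_eq_mul_integral ((hsmeas i).mul (hsmeas i')).aestronglyMeasurable
          ((hZmeas i).mul (hZmeas i')).aestronglyMeasurable]
        -- the product of the two signs has zero mean
        have hsign_indep : IndepFun (s i) (s i') μ :=
          (hindep'.indepFun hidx_ne).comp measurable_realSign measurable_realSign
        have hsign_zero : ∀ i0 : Fin (n m), ∫ ω, s i0 ω ∂μ = 0 := by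
          intro i0
          have hmapi : Measure.map (f' (idx i0)) μ
              = gaussianReal 0 (⟨(σw lf) ^ 2, sq_nonneg (σw lf)⟩ : ℝ≥0) := by
            rw [hmapf' (idx i0)]
            exact hW lf k i0
          have h1 : ∫ ω, s i0 ω ∂μ = ∫ x, Real.sign x ∂(Measure.map (f' (idx i0)) μ) := by
            rw [integral_map (hf'meas (idx i0)).aemeasurable
              measurable_realSign.aestronglyMeasurable]
          rw [h1, hmapi]; exact integral_sign_gaussianReal
        rw [hsign_indep.integral_fun_mul_eq_mul_integral (hsmeas i).aestronglyMeasurable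
          (hsmeas i').aestronglyMeasurable, hsign_zero i, hsign_zero i']
        ring
      -- diagonal terms
      have hdiag : ∀ i, ∫ ω, (s i ω * Z i ω) * (s i ω * Z i ω) ∂μ
          ≤ σ ^ 2 * ∏ m' ∈ Finset.range m, (n m' : ℝ) := by
        intro i
        have h1 : ∫ ω, (s i ω * Z i ω) * (s i ω * Z i ω) ∂μ ≤ ∫ ω, Z i ω ^ 2 ∂μ := by
          refine integral_mono (hterm_int i i) (hZsq_int i) fun ω => ?_
          have h2 : (s i ω * Z i ω) * (s i ω * Z i ω) = s i ω ^ 2 * Z i ω ^ 2 := by ring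
          rw [h2]
          calc s i ω ^ 2 * Z i ω ^ 2 ≤ 1 * Z i ω ^ 2 :=
                mul_le_mul_of_nonneg_right (realSign_sq_le_one _) (sq_nonneg _)
          _ = Z i ω ^ 2 := one_mul _
        exact le_trans h1 ((ihm i).2)
      refine ⟨hmem, ?_⟩
      rw [hsplit]
      have hsum_le : ∑ i, ∑ i', ∫ ω, (s i ω * Z i ω) * (s i' ω * Z i' ω) ∂μ
          ≤ ∑ _i : Fin (n m), σ ^ 2 * ∏ m' ∈ Finset.range m, (n m' : ℝ) := by
        refine Finset.sum_le_sum fun i _ => ?_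
        have h1 : ∑ i', ∫ ω, (s i ω * Z i ω) * (s i' ω * Z i' ω) ∂μ
            = ∫ ω, (s i ω * Z i ω) * (s i ω * Z i ω) ∂μ := by
          refine Finset.sum_eq_single_of_mem i (Finset.mem_univ i) fun i' _ hii' => ?_
          exact hoff i i' (Ne.symm hii')
        rw [h1]
        exact hdiag i
      refine le_trans hsum_le ?_
      rw [Finset.sum_const, Finset.card_univ, Fintype.card_fin, Finset.prod_range_succ]
      rw [nsmul_eq_mul]
      exact le_of_eq (by ring)
  obtain ⟨hmemL, hboundL⟩ := key L le_rfl j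
  have hvar := variance_le_expectation_sq (μ := μ) (X := fun ω => Y L ω j)
    (hYmeas L j).aestronglyMeasurable
  refine le_trans hvar ?_
  have h1 : μ[(fun ω => Y L ω j) ^ 2] = ∫ ω, (Y L ω j) ^ 2 ∂μ := by
    congr 1
  rw [h1]
  refine le_trans hboundL ?_
  rw [Fin.prod_univ_eq_prod_range (fun m => (n m : ℝ)) L]
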